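/- Let X^n, Y^n, E^n be sequences of finite-valued random variables such that the pairs (X_t, E_t) are i.i.d. across t, with X_t independent of E_t. Then (1/n) I(X^n; Y^n | E^n) ≥ (1/n) Σ_{t=1}^n I(X_t; Y_t | E_t). -/

import Mathlib

open Finset Real

noncomputable section

/-- `w` is a probability mass function on the finite sample space `Ω`. -/
def IsPMF {Ω : Type*} [Fintype Ω] (w : Ω → ℝ) : Prop :=
  (∀ ω, 0 ≤ w ω) ∧ ∑ ω, w ω = 1

/-- Distribution (pmf) of the random variable `X` under the weight `w`. -/
def rvDist {Ω A : Type*} [Fintype Ω] [DecidableEq A] (w : Ω → ℝ) (X : Ω → A) (a : A) : ℝ :=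
  ∑ ω, if X ω = a then w ω else 0

/-- Shannon entropy (in bits) of `X` under `w`. -/
def Hent {Ω A : Type*} [Fintype Ω] [Fintype A] [DecidableEq A] (w : Ω → ℝ) (X : Ω → A) : ℝ :=
  -∑ a, rvDist w X a * Real.logb 2 (rvDist w X a)

/-- Conditional entropy `H(X | Z)` (in bits). -/
def Hcond {Ω A C : Type*} [Fintype Ω] [Fintype A] [Fintype C] [DecidableEq A] [DecidableEq C]
    (w : Ω → ℝ) (X : Ω → A) (Z : Ω → C) : ℝ :=
  Hent w (fun ω => (X ω, Z ω)) - Hent w Z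

/-- Mutual information `I(X;Y)` (in bits). -/
def MI {Ω A B : Type*} [Fintype Ω] [Fintype A] [Fintype B] [DecidableEq A] [DecidableEq B]
    (w : Ω → ℝ) (X : Ω → A) (Y : Ω → B) : ℝ :=
  Hent w X + Hent w Y - Hent w (fun ω => (X ω, Y ω))

/-- Conditional mutual information `I(X;Y|E)` (in bits). -/
def CMI {Ω A B C : Type*} [Fintype Ω] [Fintype A] [Fintype B] [Fintype C]
    [DecidableEq A] [DecidableEq B] [DecidableEq C]
    (w : Ω → ℝ) (X : Ω → A) (Y : Ω → B) (E : Ω → C) : ℝ :=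
  Hent w (fun ω => (X ω, E ω)) + Hent w (fun ω => (Y ω, E ω))
    - Hent w (fun ω => (X ω, Y ω, E ω)) - Hent w E

/-- `X` and `E` are independent under `w`. -/
def IndepRV {Ω A C : Type*} [Fintype Ω] [DecidableEq A] [DecidableEq C]
    (w : Ω → ℝ) (X : Ω → A) (E : Ω → C) : Prop :=
  ∀ a c, rvDist w (fun ω => (X ω, E ω)) (a, c) = rvDist w X a * rvDist w E c

/-- The family `X` is i.i.d. under `w`: the joint pmf factorizes into the (common) marginals. -/
def IIDFamily {Ω A : Type*} [Fintype Ω] [DecidableEq A] {n : ℕ}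
    (w : Ω → ℝ) (X : Fin n → Ω → A) : Prop :=
  (∀ v : Fin n → A, rvDist w (fun ω t => X t ω) v = ∏ t, rvDist w (X t) (v t)) ∧
  (∀ s t, rvDist w (X s) = rvDist w (X t))


lemma rvDist_nonneg {Ω A : Type*} [Fintype Ω] [DecidableEq A] {w : Ω → ℝ}
    (hw : ∀ ω, 0 ≤ w ω) (X : Ω → A) (a : A) : 0 ≤ rvDist w X a := by
  apply Finset.sum_nonneg; intro ω _; split <;> simp [hw ω]

lemma rvDist_sum {Ω A : Type*} [Fintype Ω] [Fintype A] [DecidableEq A] (w : Ω → ℝ) (X : Ω → A) :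
    ∑ a, rvDist w X a = ∑ ω, w ω := by
  unfold rvDist
  rw [Finset.sum_comm]
  exact Finset.sum_congr rfl fun ω _ => by simp

lemma rvDist_comp {Ω D D' : Type*} [Fintype Ω] [Fintype D] [DecidableEq D] [DecidableEq D']
    (w : Ω → ℝ) (V : Ω → D) (f : D → D') (d' : D') :
    rvDist w (fun ω => f (V ω)) d' = ∑ d, if f d = d' then rvDist w V d else 0 := by
  unfold rvDist
  have step : ∀ d : D, (if f d = d' then ∑ ω, (if V ω = d then w ω else 0) else 0)
      = ∑ ω, (if f d = d' then (if V ω = d then w ω else 0) else 0) := by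
    intro d; split <;> simp
  simp only [step]
  rw [Finset.sum_comm]
  apply Finset.sum_congr rfl; intro ω _
  have : ∀ d, (if f d = d' then (if V ω = d then w ω else 0) else 0)
      = if V ω = d then (if f (V ω) = d' then w ω else 0) else 0 := by
    intro d; by_cases h : V ω = d <;> simp [h]
  simp only [this]
  rw [eq_comm, Finset.sum_ite_eq Finset.univ (V ω)]
  simp

lemma rvDist_comp_inj {Ω D D' : Type*} [Fintype Ω] [Fintype D] [DecidableEq D] [DecidableEq D']
    (w : Ω → ℝ) (V : Ω → D) {f : D → D'} (hf : Function.Injective f) (d : D) :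
    rvDist w (fun ω => f (V ω)) (f d) = rvDist w V d := by
  rw [rvDist_comp]
  simp only [hf.eq_iff]
  rw [Finset.sum_ite_eq' Finset.univ d]
  simp

lemma gibbs {ι : Type*} [Fintype ι] (a b : ι → ℝ) (ha : ∀ i, 0 ≤ a i) (hb : ∀ i, 0 ≤ b i)
    (hab : ∀ i, b i = 0 → a i = 0) (hs : ∑ i, b i ≤ ∑ i, a i) :
    ∑ i, a i * Real.logb 2 (b i) ≤ ∑ i, a i * Real.logb 2 (a i) := by
  have key : ∀ i, a i * Real.log (b i) - a i * Real.log (a i) ≤ b i - a i := by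
    intro i
    rcases eq_or_lt_of_le (ha i) with h | h
    · simp [← h, hb i]
    · have hbpos : 0 < b i := by
        rcases eq_or_lt_of_le (hb i) with h0 | h0
        · exfalso; have := hab i h0.symm; linarith
        · exact h0
      have hlog := Real.log_le_sub_one_of_pos (div_pos hbpos h)
      rw [Real.log_div (ne_of_gt hbpos) (ne_of_gt h)] at hlog
      have h2 : a i * (Real.log (b i) - Real.log (a i)) ≤ a i * (b i / a i - 1) :=
        mul_le_mul_of_nonneg_left hlog (le_of_lt h)
      have h3 : a i * (b i / a i - 1) = b i - a i := by
        field_simp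
      rw [h3] at h2; linarith [h2]
  have hlogsum : ∑ i, a i * Real.log (b i) ≤ ∑ i, a i * Real.log (a i) := by
    have hsum := Finset.sum_le_sum (fun i (_ : i ∈ Finset.univ) => key i)
    rw [Finset.sum_sub_distrib, Finset.sum_sub_distrib] at hsum
    linarith
  have h2 : (0:ℝ) < Real.log 2 := Real.log_pos one_lt_two
  have conv : ∀ c : ι → ℝ, ∑ i, a i * Real.logb 2 (c i) = (∑ i, a i * Real.log (c i)) / Real.log 2 := by
    intro c; rw [Finset.sum_div]; exact Finset.sum_congr rfl fun i _ => by rw [Real.logb]; ring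
  rw [conv b, conv a]
  exact (div_le_div_iff_of_pos_right h2).mpr hlogsum

lemma swap3 {A B C : Type*} [Fintype A] [Fintype B] [Fintype C] (f : A → B → C → ℝ) :
    ∑ x, ∑ y, ∑ z, f x y z = ∑ z, ∑ x, ∑ y, f x y z := by
  calc ∑ x, ∑ y, ∑ z, f x y z = ∑ x, ∑ z, ∑ y, f x y z :=
        Finset.sum_congr rfl fun x _ => Finset.sum_comm
    _ = ∑ z, ∑ x, ∑ y, f x y z := Finset.sum_comm

lemma submodular {A B C : Type*} [Fintype A] [Fintype B] [Fintype C]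
    (P : A → B → C → ℝ) (hP : ∀ x y z, 0 ≤ P x y z) :
    (∑ x, ∑ z, (∑ y, P x y z) * Real.logb 2 (∑ y, P x y z)) +
      (∑ y, ∑ z, (∑ x, P x y z) * Real.logb 2 (∑ x, P x y z)) -
      (∑ z, (∑ x, ∑ y, P x y z) * Real.logb 2 (∑ x, ∑ y, P x y z)) ≤
      ∑ x, ∑ y, ∑ z, P x y z * Real.logb 2 (P x y z) := by
  set pXZ : A → C → ℝ := fun x z => ∑ y, P x y z with hpXZ
  set pYZ : B → C → ℝ := fun y z => ∑ x, P x y z with hpYZ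
  set pZ : C → ℝ := fun z => ∑ x, ∑ y, P x y z with hpZ
  have hpXZ0 : ∀ x z, 0 ≤ pXZ x z := fun x z => Finset.sum_nonneg fun y _ => hP x y z
  have hpYZ0 : ∀ y z, 0 ≤ pYZ y z := fun y z => Finset.sum_nonneg fun x _ => hP x y z
  have hpZ0 : ∀ z, 0 ≤ pZ z := fun z => Finset.sum_nonneg fun x _ => hpXZ0 x z
  have hXZle : ∀ x y z, P x y z ≤ pXZ x z := fun x y z =>
    Finset.single_le_sum (fun y' (_ : y' ∈ Finset.univ) => hP x y' z) (Finset.mem_univ y)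
  have hYZle : ∀ x y z, P x y z ≤ pYZ y z := fun x y z =>
    Finset.single_le_sum (fun x' (_ : x' ∈ Finset.univ) => hP x' y z) (Finset.mem_univ x)
  have hZXZ : ∀ x z, pXZ x z ≤ pZ z := fun x z =>
    Finset.single_le_sum (fun x' (_ : x' ∈ Finset.univ) => hpXZ0 x' z) (Finset.mem_univ x)
  set a : A × B × C → ℝ := fun p => P p.1 p.2.1 p.2.2 with ha_def
  set b : A × B × C → ℝ := fun p => pXZ p.1 p.2.2 * pYZ p.2.1 p.2.2 / pZ p.2.2 with hb_def
  have ha0 : ∀ i, 0 ≤ a i := fun i => hP _ _ _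
  have hb0 : ∀ i, 0 ≤ b i := fun i => div_nonneg (mul_nonneg (hpXZ0 _ _) (hpYZ0 _ _)) (hpZ0 _)
  have hpos : ∀ x y z, 0 < P x y z →
      0 < pXZ x z ∧ 0 < pYZ y z ∧ 0 < pZ z := by
    intro x y z hPpos
    have h1 : 0 < pXZ x z := lt_of_lt_of_le hPpos (hXZle x y z)
    have h2 : 0 < pYZ y z := lt_of_lt_of_le hPpos (hYZle x y z)
    exact ⟨h1, h2, lt_of_lt_of_le h1 (hZXZ x z)⟩
  have hab : ∀ i, b i = 0 → a i = 0 := by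
    rintro ⟨x, y, z⟩ hb0'
    by_contra hP0
    have hPpos : 0 < P x y z := lt_of_le_of_ne (hP x y z) (Ne.symm hP0)
    obtain ⟨h1, h2, h3⟩ := hpos x y z hPpos
    have : 0 < b (x, y, z) := div_pos (mul_pos h1 h2) h3
    rw [hb0'] at this; exact lt_irrefl 0 this
  have iter : ∀ f : A × B × C → ℝ, ∑ i, f i = ∑ x, ∑ y, ∑ z, f (x, y, z) := by
    intro f; rw [Fintype.sum_prod_type]
    exact Finset.sum_congr rfl fun x _ => Fintype.sum_prod_type _
  have hbsum : ∑ i, b i ≤ ∑ i, a i := by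
    rw [iter a, iter b, swap3, swap3 (fun x y z => a (x, y, z))]
    apply Finset.sum_le_sum
    intro z _
    have e1 : ∑ x, ∑ y, b (x, y, z) = pZ z * pZ z / pZ z := by
      have expand : ∑ x, ∑ y, b (x, y, z)
          = (∑ x, pXZ x z) * (∑ y, pYZ y z) / pZ z := by
        rw [Finset.sum_mul_sum, Finset.sum_div]
        refine Finset.sum_congr rfl fun x _ => ?_
        rw [Finset.sum_div]
      rw [expand]
      have e2 : ∑ y, pYZ y z = pZ z := Finset.sum_comm
      rw [e2]
    have e3 : ∑ x, ∑ y, a (x, y, z) = pZ z := rfl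
    rw [e1, e3]
    rcases eq_or_ne (pZ z) 0 with h | h
    · simp [h]
    · rw [mul_div_assoc, div_self h, mul_one]
  have hgibbs := gibbs a b ha0 hb0 hab hbsum
  -- LHS of gibbs equals the three-term expression
  have hsplit : ∑ i, a i * Real.logb 2 (b i)
      = (∑ x, ∑ z, pXZ x z * Real.logb 2 (pXZ x z)) +
        (∑ y, ∑ z, pYZ y z * Real.logb 2 (pYZ y z)) -
        (∑ z, pZ z * Real.logb 2 (pZ z)) := by
    have term : ∀ x y z, a (x, y, z) * Real.logb 2 (b (x, y, z))
        = P x y z * Real.logb 2 (pXZ x z) + P x y z * Real.logb 2 (pYZ y z)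
          - P x y z * Real.logb 2 (pZ z) := by
      intro x y z
      rcases eq_or_lt_of_le (hP x y z) with h | h
      · simp [ha_def, ← h]
      · obtain ⟨h1, h2, h3⟩ := hpos x y z h
        have : Real.logb 2 (pXZ x z * pYZ y z / pZ z)
            = Real.logb 2 (pXZ x z) + Real.logb 2 (pYZ y z) - Real.logb 2 (pZ z) := by
          rw [Real.logb_div (mul_ne_zero (ne_of_gt h1) (ne_of_gt h2)) (ne_of_gt h3),
            Real.logb_mul (ne_of_gt h1) (ne_of_gt h2)]
        simp only [ha_def, hb_def]
        rw [this]; ring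
    rw [iter]
    simp only [term]
    have sA : ∑ x, ∑ y, ∑ z, P x y z * Real.logb 2 (pXZ x z)
        = ∑ x, ∑ z, pXZ x z * Real.logb 2 (pXZ x z) := by
      refine Finset.sum_congr rfl fun x _ => ?_
      rw [Finset.sum_comm]
      refine Finset.sum_congr rfl fun z _ => ?_
      rw [← Finset.sum_mul]
    have sB : ∑ x, ∑ y, ∑ z, P x y z * Real.logb 2 (pYZ y z)
        = ∑ y, ∑ z, pYZ y z * Real.logb 2 (pYZ y z) := by
      rw [Finset.sum_comm]
      refine Finset.sum_congr rfl fun y _ => ?_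
      rw [Finset.sum_comm]
      refine Finset.sum_congr rfl fun z _ => ?_
      rw [← Finset.sum_mul]
    have sC : ∑ x, ∑ y, ∑ z, P x y z * Real.logb 2 (pZ z)
        = ∑ z, pZ z * Real.logb 2 (pZ z) := by
      rw [swap3]
      refine Finset.sum_congr rfl fun z _ => ?_
      calc ∑ x, ∑ y, P x y z * Real.logb 2 (pZ z)
          = ∑ x, (∑ y, P x y z) * Real.logb 2 (pZ z) :=
            Finset.sum_congr rfl fun x _ => (Finset.sum_mul _ _ _).symm
        _ = (∑ x, ∑ y, P x y z) * Real.logb 2 (pZ z) := (Finset.sum_mul _ _ _).symm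
        _ = pZ z * Real.logb 2 (pZ z) := rfl
    simp only [Finset.sum_add_distrib, Finset.sum_sub_distrib]
    rw [sA, sB, sC]
  have hrhs : ∑ i, a i * Real.logb 2 (a i) = ∑ x, ∑ y, ∑ z, P x y z * Real.logb 2 (P x y z) :=
    iter _
  rw [hsplit, hrhs] at hgibbs
  exact hgibbs

lemma Hent_comp_inj {Ω D D' : Type*} [Fintype Ω] [Fintype D] [Fintype D']
    [DecidableEq D] [DecidableEq D'] (w : Ω → ℝ) (V : Ω → D) {f : D → D'}
    (hf : Function.Injective f) : Hent w (fun ω => f (V ω)) = Hent w V := by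
  unfold Hent
  congr 1
  have hq : ∀ d, rvDist w (fun ω => f (V ω)) (f d) = rvDist w V d :=
    fun d => rvDist_comp_inj w V hf d
  have hz : ∀ d' : D', d' ∉ Finset.univ.image f → rvDist w (fun ω => f (V ω)) d' = 0 := by
    intro d' hd'
    rw [rvDist_comp]
    apply Finset.sum_eq_zero
    intro d _
    rw [if_neg]
    intro h
    exact hd' (Finset.mem_image.mpr ⟨d, Finset.mem_univ d, h⟩)
  calc ∑ d' : D', rvDist w (fun ω => f (V ω)) d' * Real.logb 2 (rvDist w (fun ω => f (V ω)) d')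
      = ∑ d' ∈ Finset.univ.image f,
          rvDist w (fun ω => f (V ω)) d' * Real.logb 2 (rvDist w (fun ω => f (V ω)) d') :=
        (Finset.sum_subset (Finset.subset_univ _)
          (fun d' _ hd' => by rw [hz d' hd']; simp)).symm
    _ = ∑ d, rvDist w (fun ω => f (V ω)) (f d) * Real.logb 2 (rvDist w (fun ω => f (V ω)) (f d)) :=
        Finset.sum_image (fun d _ d' _ h => hf h)
    _ = ∑ d, rvDist w V d * Real.logb 2 (rvDist w V d) := by
        exact Finset.sum_congr rfl fun d _ => by rw [hq d]


section CMIN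
variable {Ω A B C : Type*} [Fintype Ω] [Fintype A] [Fintype B] [Fintype C]
  [DecidableEq A] [DecidableEq B] [DecidableEq C]

lemma CMI_nonneg (w : Ω → ℝ) (hw : ∀ ω, 0 ≤ w ω) (X : Ω → A) (Y : Ω → B) (E : Ω → C) :
    0 ≤ CMI w X Y E := by
  set P : A → B → C → ℝ := fun x y z => rvDist w (fun ω => (X ω, Y ω, E ω)) (x, y, z) with hP_def
  have hP0 : ∀ x y z, 0 ≤ P x y z := fun x y z => rvDist_nonneg hw _ _
  have margXZ : ∀ x z, rvDist w (fun ω => (X ω, E ω)) (x, z) = ∑ y, P x y z := by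
    intro x z
    have h : (fun ω => (X ω, E ω))
        = fun ω => (fun p : A × B × C => (p.1, p.2.2)) ((fun ω => (X ω, Y ω, E ω)) ω) := rfl
    rw [h, rvDist_comp w (fun ω => (X ω, Y ω, E ω)) (fun p => (p.1, p.2.2)) (x, z)]
    simp [Fintype.sum_prod_type, Prod.ext_iff, ite_and, Finset.sum_ite_eq, Finset.sum_ite_eq']
    rfl
  have margYZ : ∀ y z, rvDist w (fun ω => (Y ω, E ω)) (y, z) = ∑ x, P x y z := by
    intro y z
    have h : (fun ω => (Y ω, E ω))
        = fun ω => (fun p : A × B × C => p.2) ((fun ω => (X ω, Y ω, E ω)) ω) := rfl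
    rw [h, rvDist_comp w (fun ω => (X ω, Y ω, E ω)) (fun p => p.2) (y, z)]
    simp [Fintype.sum_prod_type, Prod.ext_iff, ite_and, Finset.sum_ite_eq, Finset.sum_ite_eq']
    rfl
  have margZ : ∀ z, rvDist w E z = ∑ x, ∑ y, P x y z := by
    intro z
    have h : E = fun ω => (fun p : A × B × C => p.2.2) ((fun ω => (X ω, Y ω, E ω)) ω) := rfl
    rw [h, rvDist_comp w (fun ω => (X ω, Y ω, E ω)) (fun p => p.2.2) z]
    simp [Fintype.sum_prod_type, Prod.ext_iff, ite_and, Finset.sum_ite_eq, Finset.sum_ite_eq']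
    rfl
  have hXYZ : Hent w (fun ω => (X ω, Y ω, E ω))
      = -∑ x, ∑ y, ∑ z, P x y z * Real.logb 2 (P x y z) := by
    unfold Hent
    congr 1
    rw [Fintype.sum_prod_type]
    exact Finset.sum_congr rfl fun x _ => Fintype.sum_prod_type _
  have hXZ : Hent w (fun ω => (X ω, E ω))
      = -∑ x, ∑ z, (∑ y, P x y z) * Real.logb 2 (∑ y, P x y z) := by
    unfold Hent
    congr 1
    rw [Fintype.sum_prod_type]
    exact Finset.sum_congr rfl fun x _ => Finset.sum_congr rfl fun z _ => by rw [margXZ]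
  have hYZ : Hent w (fun ω => (Y ω, E ω))
      = -∑ y, ∑ z, (∑ x, P x y z) * Real.logb 2 (∑ x, P x y z) := by
    unfold Hent
    congr 1
    rw [Fintype.sum_prod_type]
    exact Finset.sum_congr rfl fun y _ => Finset.sum_congr rfl fun z _ => by rw [margYZ]
  have hZ : Hent w E = -∑ z, (∑ x, ∑ y, P x y z) * Real.logb 2 (∑ x, ∑ y, P x y z) := by
    unfold Hent
    congr 1
    exact Finset.sum_congr rfl fun z _ => by rw [margZ]
  have := submodular P hP0
  unfold CMI
  rw [hXYZ, hXZ, hYZ, hZ]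
  linarith

lemma Hcond_pair_le (w : Ω → ℝ) (hw : ∀ ω, 0 ≤ w ω) (U : Ω → A) (V : Ω → B) (Z : Ω → C) :
    Hcond w (fun ω => (U ω, V ω)) Z ≤ Hcond w U Z + Hcond w V Z := by
  have h := CMI_nonneg w hw U V Z
  unfold CMI at h
  unfold Hcond
  have hinj : Function.Injective (fun p : A × B × C => ((p.1, p.2.1), p.2.2)) := by
    intro p q hpq
    simp only [Prod.mk.injEq] at hpq
    exact Prod.ext hpq.1.1 (Prod.ext hpq.1.2 hpq.2)
  have recode : Hent w (fun ω => ((U ω, V ω), Z ω)) = Hent w (fun ω => (U ω, V ω, Z ω)) := by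
    have e := Hent_comp_inj w (fun ω => (U ω, V ω, Z ω)) hinj
    exact e
  rw [recode]
  linarith

lemma Hcond_cond_pair_le (w : Ω → ℝ) (hw : ∀ ω, 0 ≤ w ω) (X : Ω → A) (Z : Ω → B) (W : Ω → C) :
    Hcond w X (fun ω => (Z ω, W ω)) ≤ Hcond w X Z := by
  have h := CMI_nonneg w hw X W Z
  unfold CMI at h
  unfold Hcond
  have r1 : Hent w (fun ω => (W ω, Z ω)) = Hent w (fun ω => (Z ω, W ω)) := by
    have hinj : Function.Injective (fun p : B × C => (p.2, p.1)) := by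
      intro p q hpq
      simp only [Prod.mk.injEq] at hpq
      exact Prod.ext hpq.2 hpq.1
    have e := Hent_comp_inj w (fun ω => (Z ω, W ω)) hinj
    exact e
  have r2 : Hent w (fun ω => (X ω, W ω, Z ω)) = Hent w (fun ω => (X ω, Z ω, W ω)) := by
    have hinj : Function.Injective (fun p : A × B × C => (p.1, p.2.2, p.2.1)) := by
      intro p q hpq
      simp only [Prod.mk.injEq] at hpq
      exact Prod.ext hpq.1 (Prod.ext hpq.2.2 hpq.2.1)
    have e := Hent_comp_inj w (fun ω => (X ω, Z ω, W ω)) hinj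
    exact e
  rw [r1, r2] at h
  linarith

lemma Hcond_comp_le {D : Type*} [Fintype D] [DecidableEq D]
    (w : Ω → ℝ) (hw : ∀ ω, 0 ≤ w ω) (X : Ω → A) (Z : Ω → C) (g : C → D) :
    Hcond w X Z ≤ Hcond w X (fun ω => g (Z ω)) := by
  have key : Hcond w X Z = Hcond w X (fun ω => (g (Z ω), Z ω)) := by
    unfold Hcond
    have r1 : Hent w (fun ω => (g (Z ω), Z ω)) = Hent w Z := by
      have hinj : Function.Injective (fun z : C => (g z, z)) := by
        intro p q hpq
        simp only [Prod.mk.injEq] at hpq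
        exact hpq.2
      have e := Hent_comp_inj w Z hinj
      exact e
    have r2 : Hent w (fun ω => (X ω, g (Z ω), Z ω)) = Hent w (fun ω => (X ω, Z ω)) := by
      have hinj : Function.Injective (fun p : A × C => (p.1, g p.2, p.2)) := by
        intro p q hpq
        simp only [Prod.mk.injEq] at hpq
        exact Prod.ext hpq.1 hpq.2.2
      have e := Hent_comp_inj w (fun ω => (X ω, Z ω)) hinj
      exact e
    rw [r1, r2]
  rw [key]
  exact Hcond_cond_pair_le w hw X (fun ω => g (Z ω)) Z

lemma Hcond_vec_le {n : ℕ} (w : Ω → ℝ) (hw : ∀ ω, 0 ≤ w ω) (X : Fin n → Ω → A) (Z : Ω → C) :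
    Hcond w (fun ω (t : Fin n) => X t ω) Z ≤ ∑ t, Hcond w (X t) Z := by
  induction n with
  | zero =>
    have hz : Hcond w (fun ω (t : Fin 0) => X t ω) Z = 0 := by
      unfold Hcond
      have hfe : (fun ω => ((fun t : Fin 0 => X t ω), Z ω))
          = fun ω => ((fun z : C => ((fun t : Fin 0 => t.elim0), z)) (Z ω)) := by
        funext ω
        exact Prod.ext (Subsingleton.elim _ _) rfl
      rw [hfe]
      have hinj : Function.Injective (fun z : C => ((fun t : Fin 0 => t.elim0 : Fin 0 → A), z)) := by
        intro p q hpq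
        simpa using congrArg Prod.snd hpq
      have e := Hent_comp_inj w Z hinj
      rw [e]; ring
    rw [hz]; simp
  | succ n ih =>
    set tailfn : Ω → Fin n → A := fun ω t => X t.succ ω with htailfn
    set pairfn : Ω → A × (Fin n → A) := fun ω => (X 0 ω, tailfn ω) with hpairfn
    have hinj : Function.Injective (fun q : A × (Fin n → A) => (Fin.cons q.1 q.2 : Fin (n+1) → A)) := by
      intro p q hpq
      have h0 := congrFun hpq 0
      simp only [Fin.cons_zero] at h0
      refine Prod.ext h0 ?_
      funext t
      have ht := congrFun hpq t.succ
      simpa using ht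
    have hcons_eq : (fun ω => (fun q : A × (Fin n → A) => (Fin.cons q.1 q.2 : Fin (n+1) → A)) (pairfn ω))
        = fun ω (t : Fin (n+1)) => X t ω := by
      funext ω
      funext t
      refine Fin.cases ?_ (fun i => ?_) t <;> simp [hpairfn, htailfn]
    have hrecode : Hcond w (fun ω (t : Fin (n+1)) => X t ω) Z = Hcond w pairfn Z := by
      unfold Hcond
      have e1 : Hent w (fun ω => ((fun t : Fin (n+1) => X t ω), Z ω))
          = Hent w (fun ω => (pairfn ω, Z ω)) := by
        have hinj2 : Function.Injective
            (fun q : (A × (Fin n → A)) × C => ((Fin.cons q.1.1 q.1.2 : Fin (n+1) → A), q.2)) := by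
          intro p q hpq
          simp only [Prod.mk.injEq] at hpq
          exact Prod.ext (hinj (by exact hpq.1)) hpq.2
        have e := Hent_comp_inj w (fun ω => (pairfn ω, Z ω)) hinj2
        rw [← e]
        congr 1
        funext ω
        refine Prod.ext ?_ rfl
        exact (congrFun hcons_eq ω).symm
      rw [e1]
    rw [hrecode]
    calc Hcond w pairfn Z ≤ Hcond w (X 0) Z + Hcond w tailfn Z :=
          Hcond_pair_le w hw (X 0) tailfn Z
      _ ≤ Hcond w (X 0) Z + ∑ t : Fin n, Hcond w (X t.succ) Z := by
          have := ih (fun t => X t.succ)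
          linarith
      _ = ∑ t : Fin (n+1), Hcond w (X t) Z := (Fin.sum_univ_succ (f := fun t => Hcond w (X t) Z)).symm

lemma phi_mul (x y : ℝ) (hx : 0 ≤ x) (hy : 0 ≤ y) :
    (x * y) * Real.logb 2 (x * y) = x * (y * Real.logb 2 y) + y * (x * Real.logb 2 x) := by
  rcases eq_or_lt_of_le hx with h | h
  · simp [← h]
  rcases eq_or_lt_of_le hy with h' | h'
  · simp [← h']
  rw [Real.logb_mul (ne_of_gt h) (ne_of_gt h')]
  ring

lemma Hent_pair_indep (w : Ω → ℝ) (hw : IsPMF w) (U : Ω → A) (V : Ω → B)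
    (hfac : ∀ a c, rvDist w (fun ω => (U ω, V ω)) (a, c) = rvDist w U a * rvDist w V c) :
    Hent w (fun ω => (U ω, V ω)) = Hent w U + Hent w V := by
  have hU1 : ∑ a, rvDist w U a = 1 := by rw [rvDist_sum, hw.2]
  have hV1 : ∑ c, rvDist w V c = 1 := by rw [rvDist_sum, hw.2]
  unfold Hent
  rw [Fintype.sum_prod_type]
  have key : ∑ a, ∑ c, rvDist w (fun ω => (U ω, V ω)) (a, c)
        * Real.logb 2 (rvDist w (fun ω => (U ω, V ω)) (a, c))
      = (∑ a, rvDist w U a * Real.logb 2 (rvDist w U a))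
        + (∑ c, rvDist w V c * Real.logb 2 (rvDist w V c)) := by
    have step : ∀ a, ∑ c, rvDist w (fun ω => (U ω, V ω)) (a, c)
          * Real.logb 2 (rvDist w (fun ω => (U ω, V ω)) (a, c))
        = rvDist w U a * (∑ c, rvDist w V c * Real.logb 2 (rvDist w V c))
          + rvDist w U a * Real.logb 2 (rvDist w U a) := by
      intro a
      have : ∀ c, rvDist w (fun ω => (U ω, V ω)) (a, c)
            * Real.logb 2 (rvDist w (fun ω => (U ω, V ω)) (a, c))
          = rvDist w U a * (rvDist w V c * Real.logb 2 (rvDist w V c))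
            + rvDist w V c * (rvDist w U a * Real.logb 2 (rvDist w U a)) := by
        intro c
        rw [hfac a c]
        exact phi_mul _ _ (rvDist_nonneg hw.1 U a) (rvDist_nonneg hw.1 V c)
      rw [Finset.sum_congr rfl fun c _ => this c, Finset.sum_add_distrib,
        ← Finset.mul_sum, ← Finset.sum_mul, hV1, one_mul]
    rw [Finset.sum_congr rfl fun a _ => step a, Finset.sum_add_distrib,
      ← Finset.sum_mul, hU1, one_mul, add_comm]
  rw [key]; ring

lemma Hent_vec_indep {n : ℕ} (w : Ω → ℝ) (hw : IsPMF w) (P : Fin n → Ω → A)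
    (hjoint : ∀ v : Fin n → A, rvDist w (fun ω t => P t ω) v = ∏ t, rvDist w (P t) (v t)) :
    Hent w (fun ω t => P t ω) = ∑ t, Hent w (P t) := by
  induction n with
  | zero =>
    have hone : ∀ v : Fin 0 → A, rvDist w (fun ω (t : Fin 0) => P t ω) v = 1 := by
      intro v
      unfold rvDist
      rw [← hw.2]
      exact Finset.sum_congr rfl fun ω _ => if_pos (Subsingleton.elim _ _)
    unfold Hent
    simp [hone]
  | succ n ih =>
    set tailfn : Ω → Fin n → A := fun ω t => P t.succ ω with htailfn
    set pairfn : Ω → A × (Fin n → A) := fun ω => (P 0 ω, tailfn ω) with hpairfn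
    have hinj : Function.Injective (fun q : A × (Fin n → A) => (Fin.cons q.1 q.2 : Fin (n+1) → A)) := by
      intro p q hpq
      have h0 := congrFun hpq 0
      simp only [Fin.cons_zero] at h0
      refine Prod.ext h0 ?_
      funext t
      have ht := congrFun hpq t.succ
      simpa using ht
    have hcons_eq : (fun ω => (fun q : A × (Fin n → A) => (Fin.cons q.1 q.2 : Fin (n+1) → A)) (pairfn ω))
        = fun ω (t : Fin (n+1)) => P t ω := by
      funext ω
      funext t
      refine Fin.cases ?_ (fun i => ?_) t <;> simp [hpairfn, htailfn]
    have hpair : ∀ (a : A) (v : Fin n → A), rvDist w pairfn (a, v)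
        = rvDist w (P 0) a * ∏ t, rvDist w (P t.succ) (v t) := by
      intro a v
      have e := rvDist_comp_inj w pairfn hinj (a, v)
      rw [← e]
      have e2 : rvDist w (fun ω => (fun q : A × (Fin n → A) => (Fin.cons q.1 q.2 : Fin (n+1) → A)) (pairfn ω))
          ((fun q : A × (Fin n → A) => (Fin.cons q.1 q.2 : Fin (n+1) → A)) (a, v))
          = rvDist w (fun ω (t : Fin (n+1)) => P t ω) (Fin.cons a v) := by
        rw [hcons_eq]
      rw [e2, hjoint, Fin.prod_univ_succ]
      simp
    have htail : ∀ v : Fin n → A, rvDist w tailfn v = ∏ t, rvDist w (P t.succ) (v t) := by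
      intro v
      have h1 : tailfn = fun ω => Prod.snd (pairfn ω) := rfl
      rw [h1, rvDist_comp w pairfn Prod.snd v]
      rw [Fintype.sum_prod_type]
      have collapse : ∀ a : A, (∑ v' : Fin n → A, if Prod.snd (a, v') = v then rvDist w pairfn (a, v') else 0)
          = rvDist w pairfn (a, v) := by
        intro a
        simp [Finset.sum_ite_eq']
      rw [Finset.sum_congr rfl fun a _ => collapse a]
      have : ∀ a : A, rvDist w pairfn (a, v) = rvDist w (P 0) a * ∏ t, rvDist w (P t.succ) (v t) :=
        fun a => hpair a v
      rw [Finset.sum_congr rfl fun a _ => this a, ← Finset.sum_mul, rvDist_sum, hw.2, one_mul]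
    have hfacpair : ∀ (a : A) (c : Fin n → A),
        rvDist w (fun ω => (P 0 ω, tailfn ω)) (a, c) = rvDist w (P 0) a * rvDist w tailfn c := by
      intro a c
      rw [htail c]
      exact hpair a c
    have hHrecode : Hent w (fun ω (t : Fin (n+1)) => P t ω) = Hent w pairfn := by
      have e := Hent_comp_inj w pairfn hinj
      rw [← e]
      congr 1
      exact hcons_eq.symm
    rw [hHrecode]
    have e3 : Hent w pairfn = Hent w (P 0) + Hent w tailfn :=
      Hent_pair_indep w hw (P 0) tailfn hfacpair
    rw [e3, ih (fun t => P t.succ) htail, Fin.sum_univ_succ]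

lemma margE_fac {n : ℕ} (w : Ω → ℝ) (X : Fin n → Ω → A) (E : Fin n → Ω → C)
    (hjoint : ∀ v : Fin n → A × C, rvDist w (fun ω t => (X t ω, E t ω)) v
      = ∏ t, rvDist w (fun ω => (X t ω, E t ω)) (v t)) :
    ∀ v : Fin n → C, rvDist w (fun ω t => E t ω) v = ∏ t, rvDist w (E t) (v t) := by
  intro v
  have margE : ∀ (t : Fin n) (c : C), rvDist w (E t) c
      = ∑ a, rvDist w (fun ω => (X t ω, E t ω)) (a, c) := by
    intro t c
    have h1 : E t = fun ω => Prod.snd ((fun ω => (X t ω, E t ω)) ω) := rfl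
    rw [h1, rvDist_comp w (fun ω => (X t ω, E t ω)) Prod.snd c]
    rw [Fintype.sum_prod_type]
    refine Finset.sum_congr rfl fun a _ => ?_
    simp [Finset.sum_ite_eq']
  have h1 : (fun ω (t : Fin n) => E t ω)
      = fun ω => (fun u : Fin n → A × C => fun t => (u t).2) ((fun ω t => (X t ω, E t ω)) ω) := rfl
  rw [h1, rvDist_comp w (fun ω t => (X t ω, E t ω)) (fun u => fun t => (u t).2) v]
  have hrw : ∀ u : Fin n → A × C, (if (fun t => (u t).2) = v then rvDist w (fun ω t => (X t ω, E t ω)) u else 0)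
      = if (fun t => (u t).2) = v then ∏ t, rvDist w (fun ω => (X t ω, E t ω)) (u t) else 0 := by
    intro u
    split
    · exact hjoint u
    · rfl
  rw [Finset.sum_congr rfl fun u _ => hrw u]
  set e : (Fin n → A × C) ≃ (Fin n → A) × (Fin n → C) := Equiv.arrowProdEquivProdArrow (Fin n) (fun _ => A) (fun _ => C) with he
  rw [← Equiv.sum_comp e.symm
    (fun u => if (fun t => (u t).2) = v then ∏ t, rvDist w (fun ω => (X t ω, E t ω)) (u t) else 0)]
  rw [Fintype.sum_prod_type]
  have inner : ∀ xa : Fin n → A,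
      (∑ xc : Fin n → C, if (fun t => ((e.symm (xa, xc)) t).2) = v
        then ∏ t, rvDist w (fun ω => (X t ω, E t ω)) ((e.symm (xa, xc)) t) else 0)
      = ∏ t, rvDist w (fun ω => (X t ω, E t ω)) (xa t, v t) := by
    intro xa
    have hsymm : ∀ xc : Fin n → C, e.symm (xa, xc) = fun t => (xa t, xc t) := fun xc => rfl
    simp only [hsymm]
    have hcond : ∀ xc : Fin n → C, ((fun t => ((fun t => (xa t, xc t)) t).2) = v) = (xc = v) := by
      intro xc
      simp only [eq_iff_iff]
    simp only [hcond]
    rw [Finset.sum_ite_eq' Finset.univ v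
      (fun xc => ∏ t, rvDist w (fun ω => (X t ω, E t ω)) (xa t, xc t))]
    simp
  rw [Finset.sum_congr rfl fun xa _ => inner xa]
  have hprodsum := Finset.prod_univ_sum (κ := fun _ : Fin n => A) (t := fun _ : Fin n => (Finset.univ : Finset A))
    (f := fun t a => rvDist w (fun ω => (X t ω, E t ω)) (a, v t))
  rw [Fintype.piFinset_univ] at hprodsum
  rw [← hprodsum]
  exact Finset.prod_congr rfl fun t _ => (margE t (v t)).symm

end CMIN


/-- if the pairs `(X_t,E_t)` are i.i.d. across `t` and `X_t ⊥ E_t`, then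
`(1/n) I(X^n;Y^n|E^n) ≥ (1/n) ∑_t I(X_t;Y_t|E_t)`. -/
theorem single_letterization_cond {Ω A B C : Type*} [Fintype Ω] [Fintype A] [Fintype B]
    [Fintype C] [DecidableEq A] [DecidableEq B] [DecidableEq C] {n : ℕ}
    (w : Ω → ℝ) (hw : IsPMF w)
    (X : Fin n → Ω → A) (Y : Fin n → Ω → B) (E : Fin n → Ω → C)
    (hXE : IIDFamily w (fun t ω => (X t ω, E t ω)))
    (hindep : ∀ t, IndepRV w (X t) (E t)) :
    (1 / (n : ℝ)) * ∑ t, CMI w (X t) (Y t) (E t) ≤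
      (1 / (n : ℝ)) * CMI w (fun ω (t : Fin n) => X t ω) (fun ω (t : Fin n) => Y t ω)
        (fun ω (t : Fin n) => E t ω) := by
  have hw0 := hw.1
  have hCMIbig : CMI w (fun ω (t : Fin n) => X t ω) (fun ω (t : Fin n) => Y t ω)
        (fun ω (t : Fin n) => E t ω)
      = Hcond w (fun ω (t : Fin n) => X t ω) (fun ω (t : Fin n) => E t ω)
        - Hcond w (fun ω (t : Fin n) => X t ω)
          (fun ω => ((fun t : Fin n => Y t ω), (fun t : Fin n => E t ω))) := by
    simp only [CMI, Hcond]
    ring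
  have hsmall : ∀ t, CMI w (X t) (Y t) (E t)
      = Hcond w (X t) (E t) - Hcond w (X t) (fun ω => (Y t ω, E t ω)) := by
    intro t
    simp only [CMI, Hcond]
    ring
  have hXEfac := hXE.1
  have hEfac := margE_fac w X E hXEfac
  have hHXE : Hent w (fun ω (t : Fin n) => (X t ω, E t ω))
      = ∑ t, Hent w (fun ω => (X t ω, E t ω)) :=
    Hent_vec_indep w hw _ hXEfac
  have hHE : Hent w (fun ω (t : Fin n) => E t ω) = ∑ t, Hent w (E t) :=
    Hent_vec_indep w hw E hEfac
  have hrec : Hent w (fun ω => ((fun t : Fin n => X t ω), (fun t : Fin n => E t ω)))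
      = Hent w (fun ω (t : Fin n) => (X t ω, E t ω)) := by
    have hinj : Function.Injective (fun u : Fin n → A × C =>
        ((fun t => (u t).1, fun t => (u t).2) : (Fin n → A) × (Fin n → C))) := by
      intro p q hpq
      funext t
      have h1 := congrFun (congrArg Prod.fst hpq) t
      have h2 := congrFun (congrArg Prod.snd hpq) t
      exact Prod.ext h1 h2
    have e := Hent_comp_inj w (fun ω (t : Fin n) => (X t ω, E t ω)) hinj
    exact e
  have hcondeq : Hcond w (fun ω (t : Fin n) => X t ω) (fun ω (t : Fin n) => E t ω)
      = ∑ t, Hcond w (X t) (E t) := by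
    simp only [Hcond]
    rw [hrec, hHXE, hHE, ← Finset.sum_sub_distrib]
  have hineq : Hcond w (fun ω (t : Fin n) => X t ω)
        (fun ω => ((fun t : Fin n => Y t ω), (fun t : Fin n => E t ω)))
      ≤ ∑ t, Hcond w (X t) (fun ω => (Y t ω, E t ω)) := by
    calc Hcond w (fun ω (t : Fin n) => X t ω)
          (fun ω => ((fun t : Fin n => Y t ω), (fun t : Fin n => E t ω)))
        ≤ ∑ t, Hcond w (X t) (fun ω => ((fun t : Fin n => Y t ω), (fun t : Fin n => E t ω))) :=
          Hcond_vec_le w hw0 X _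
      _ ≤ ∑ t, Hcond w (X t) (fun ω => (Y t ω, E t ω)) := by
          apply Finset.sum_le_sum
          intro t _
          have e := Hcond_comp_le w hw0 (X t)
            (fun ω => ((fun t : Fin n => Y t ω), (fun t : Fin n => E t ω)))
            (fun p => (p.1 t, p.2 t))
          exact e
  have key : ∑ t, CMI w (X t) (Y t) (E t)
      ≤ CMI w (fun ω (t : Fin n) => X t ω) (fun ω (t : Fin n) => Y t ω)
        (fun ω (t : Fin n) => E t ω) := by
    rw [hCMIbig]
    have hsum : ∑ t, CMI w (X t) (Y t) (E t)
        = ∑ t, Hcond w (X t) (E t) - ∑ t, Hcond w (X t) (fun ω => (Y t ω, E t ω)) := by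
      rw [← Finset.sum_sub_distrib]
      exact Finset.sum_congr rfl fun t _ => hsmall t
    rw [hsum, ← hcondeq]
    linarith
  have hn : 0 ≤ 1 / (n : ℝ) := by positivity
  exact mul_le_mul_of_nonneg_left key hn
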